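/- Deterministic misclustering bound for K-SVD in the equal-variance, equal-separation case: let 0 ≤ β < α ≤ 1, let r ≥ 2 with n ≥ r+1, let Z be the membership matrix of a partition of {1,…,n} into r clusters each of size n/r, and set K̃ := (α−β)·ZZᵀ + β·E_n + (1−α)·I_n, where E_n is the n×n all-ones matrix. Let K ∈ ℝ^{n×n} be symmetric, let Û ∈ ℝ^{n×r} be a matrix whose columns are орthonormal eigenvectors of K associated with its r largest eigenvalues, and let C, with rows c_1,…,c_n, be a minimizer of ‖Û − M‖_F² over matrices M ∈ ℝ^{n×r} with at most r distinct rows. Then there exist ν ∈ ℝ^{r×r} with νᵀν = (r/n)·I_r and an orthogonal R ∈ ℝ^{r×r} such that |{i : ‖c_i − Z_i ν R‖ ≥ √(r/(2n))}| ≤ 64·r·‖K − K̃‖_F² / ((α−β)²·n). -/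

import Mathlib

open Matrix

/-- Squared Frobenius norm `‖M‖_F² = Σ_{i,j} M_{ij}²`. -/
def frobSq {n d : ℕ} (M : Matrix (Fin n) (Fin d) ℝ) : ℝ := ∑ i, ∑ j, (M i j) ^ 2

/-- The number of distinct rows of a matrix. -/
noncomputable def nDistinctRows {n d : ℕ} (M : Matrix (Fin n) (Fin d) ℝ) : ℕ :=
  (Finset.univ.image fun i => M i).card

/-- The eigenvalues of a Hermitian matrix, listed in nonincreasing order. -/
noncomputable def eigDesc {n : ℕ} {M : Matrix (Fin n) (Fin n) ℝ} (hM : M.IsHermitian)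
    (i : Fin n) : ℝ :=
  hM.eigenvalues (Tuple.sort hM.eigenvalues i.rev)


lemma frobSq_eq_trace {n d : ℕ} (M : Matrix (Fin n) (Fin d) ℝ) :
    frobSq M = (Mᵀ * M).trace := by
  simp only [frobSq, Matrix.trace, Matrix.diag, mul_apply, transpose_apply, sq]
  exact Finset.sum_comm

lemma frobSq_nonneg {n d : ℕ} (M : Matrix (Fin n) (Fin d) ℝ) : 0 ≤ frobSq M := by
  apply Finset.sum_nonneg; intro i _; apply Finset.sum_nonneg; intro j _; positivity

lemma frobSq_sub_comm {n d : ℕ} (A B : Matrix (Fin n) (Fin d) ℝ) :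
    frobSq (A - B) = frobSq (B - A) := by
  simp only [frobSq, Matrix.sub_apply]
  congr 1; ext i; congr 1; ext j; ring

/-- Frobenius inner product. -/
def fip {n d : ℕ} (A B : Matrix (Fin n) (Fin d) ℝ) : ℝ := ∑ i, ∑ j, A i j * B i j

lemma fip_eq_trace {n d : ℕ} (A B : Matrix (Fin n) (Fin d) ℝ) :
    fip A B = (Aᵀ * B).trace := by
  simp only [fip, Matrix.trace, Matrix.diag, mul_apply, transpose_apply]
  exact Finset.sum_comm

lemma fip_self {n d : ℕ} (A : Matrix (Fin n) (Fin d) ℝ) : fip A A = frobSq A := by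
  simp [fip, frobSq, sq]

lemma fip_cs {n d : ℕ} (A B : Matrix (Fin n) (Fin d) ℝ) :
    fip A B ≤ Real.sqrt (frobSq A) * Real.sqrt (frobSq B) := by
  have h1 : (∑ p : Fin n × Fin d, A p.1 p.2 * B p.1 p.2) ^ 2 ≤
      (∑ p : Fin n × Fin d, (A p.1 p.2) ^ 2) * (∑ p : Fin n × Fin d, (B p.1 p.2) ^ 2) :=
    Finset.sum_mul_sq_le_sq_mul_sq Finset.univ _ _
  have eA : (∑ p : Fin n × Fin d, (A p.1 p.2) ^ 2) = frobSq A := by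
    rw [frobSq, ← Finset.sum_product']; rfl
  have eB : (∑ p : Fin n × Fin d, (B p.1 p.2) ^ 2) = frobSq B := by
    rw [frobSq, ← Finset.sum_product']; rfl
  have eAB : (∑ p : Fin n × Fin d, A p.1 p.2 * B p.1 p.2) = fip A B := by
    rw [fip, ← Finset.sum_product']; rfl
  rw [eA, eB, eAB] at h1
  calc fip A B ≤ |fip A B| := le_abs_self _
    _ = Real.sqrt ((fip A B) ^ 2) := (Real.sqrt_sq_eq_abs _).symm
    _ ≤ Real.sqrt (frobSq A * frobSq B) := Real.sqrt_le_sqrt h1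
    _ = _ := Real.sqrt_mul (frobSq_nonneg A) _

lemma frobSq_add_le {n d : ℕ} (X Y : Matrix (Fin n) (Fin d) ℝ) :
    frobSq (X + Y) ≤ (Real.sqrt (frobSq X) + Real.sqrt (frobSq Y)) ^ 2 := by
  have e : frobSq (X + Y) = frobSq X + 2 * fip X Y + frobSq Y := by
    simp only [frobSq, fip, Matrix.add_apply, ← Finset.sum_add_distrib, Finset.mul_sum]
    congr 1; ext i; congr 1; ext j; ring
  have hX := Real.sq_sqrt (frobSq_nonneg X)
  have hY := Real.sq_sqrt (frobSq_nonneg Y)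
  have := fip_cs X Y
  nlinarith [Real.sqrt_nonneg (frobSq X), Real.sqrt_nonneg (frobSq Y)]

/-- If `U` has orthonormal columns, `‖UᵀY‖_F ≤ ‖Y‖_F`. -/
lemma frobSq_transpose_mul_le {n r m : ℕ} {U : Matrix (Fin n) (Fin r) ℝ}
    (hU : Uᵀ * U = 1) (Y : Matrix (Fin n) (Fin m) ℝ) :
    frobSq (Uᵀ * Y) ≤ frobSq Y := by
  have key : (Y - U * (Uᵀ * Y))ᵀ * (Y - U * (Uᵀ * Y)) = Yᵀ * Y - (Uᵀ * Y)ᵀ * (Uᵀ * Y) := by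
    simp only [transpose_sub, transpose_mul, transpose_transpose, Matrix.sub_mul,
      Matrix.mul_sub]
    have hU' : Yᵀ * (U * (Uᵀ * (U * (Uᵀ * Y)))) = Yᵀ * (U * (Uᵀ * Y)) := by
      rw [← Matrix.mul_assoc Uᵀ U (Uᵀ * Y), hU, Matrix.one_mul]
    simp only [Matrix.mul_assoc, hU']
    abel
  have h0 := frobSq_nonneg (Y - U * (Uᵀ * Y))
  rw [frobSq_eq_trace, key, trace_sub, ← frobSq_eq_trace, ← frobSq_eq_trace] at h0
  linarith

/-- Vector form of the contraction lemma. -/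
lemma sum_sq_transpose_mulVec_le {n r : ℕ} {U : Matrix (Fin n) (Fin r) ℝ}
    (hU : Uᵀ * U = 1) (y : Fin n → ℝ) :
    ∑ a, (∑ i, U i a * y i) ^ 2 ≤ ∑ i, (y i) ^ 2 := by
  have := frobSq_transpose_mul_le hU (Matrix.of (fun i (_ : Fin 1) => y i))
  simpa [frobSq, mul_apply] using this

/-- Abel-type threshold lemma: antitone `f`, weights in `[0,1]` summing to `r`. -/
lemma weighted_sum_le {n r : ℕ} (hr : 1 ≤ r) (hrn : r ≤ n) (f w : Fin n → ℝ)
    (hf : Antitone f) (hw0 : ∀ j, 0 ≤ w j) (hw1 : ∀ j, w j ≤ 1)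
    (hsum : ∑ j, w j = r) :
    ∑ j, f j * w j ≤ ∑ j ∈ Finset.univ.filter (fun j : Fin n => (j : ℕ) < r), f j := by
  set s := Finset.univ.filter (fun j : Fin n => (j : ℕ) < r) with hs
  have hcard : s.card = r := by
    rw [hs, Finset.card_filter,
      Fin.sum_univ_eq_sum_range (fun j => if j < r then 1 else 0), ← Finset.card_filter]
    have e : (Finset.range n).filter (fun x => x < r) = Finset.range r := by
      ext x; simp only [Finset.mem_filter, Finset.mem_range]; omega
    rw [e, Finset.card_range]
  set jr : Fin n := ⟨r - 1, by omega⟩ with hjr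
  set t := f jr with ht
  have hbs : ∀ j ∈ s, f j * w j ≤ f j - t * (1 - w j) := by
    intro j hj
    rw [hs, Finset.mem_filter] at hj
    have hjt : t ≤ f j := hf (by rw [Fin.le_def]; simp only [hjr]; omega)
    nlinarith [hw1 j]
  have hbc : ∀ j ∈ Finset.univ.filter (fun j : Fin n => ¬ (j : ℕ) < r),
      f j * w j ≤ t * w j := by
    intro j hj
    rw [Finset.mem_filter] at hj
    have : f j ≤ t := hf (by rw [Fin.le_def]; simp only [hjr]; omega)
    nlinarith [hw0 j]
  have hsplit : ∑ j, f j * w j = ∑ j ∈ s, f j * w j +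
      ∑ j ∈ Finset.univ.filter (fun j : Fin n => ¬ (j : ℕ) < r), f j * w j :=
    (Finset.sum_filter_add_sum_filter_not Finset.univ _ _).symm
  have hwsplit : ∑ j ∈ s, w j +
      ∑ j ∈ Finset.univ.filter (fun j : Fin n => ¬ (j : ℕ) < r), w j = (r : ℝ) := by
    rw [Finset.sum_filter_add_sum_filter_not Finset.univ _ _, hsum]
  have h1 : ∑ j ∈ s, f j * w j ≤ ∑ j ∈ s, (f j - t * (1 - w j)) :=
    Finset.sum_le_sum hbs
  have h2 : ∑ j ∈ Finset.univ.filter (fun j : Fin n => ¬ (j : ℕ) < r), f j * w j ≤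
      ∑ j ∈ Finset.univ.filter (fun j : Fin n => ¬ (j : ℕ) < r), t * w j :=
    Finset.sum_le_sum hbc
  have e1 : ∑ j ∈ s, (f j - t * (1 - w j)) =
      ∑ j ∈ s, f j - t * s.card + t * ∑ j ∈ s, w j := by
    rw [Finset.sum_sub_distrib]
    have e : ∑ x ∈ s, t * (1 - w x) = t * s.card - t * ∑ x ∈ s, w x := by
      rw [← Finset.mul_sum, Finset.sum_sub_distrib, Finset.sum_const, nsmul_eq_mul, mul_one,
        mul_sub]
    rw [e]; ring
  have e2 : ∑ j ∈ Finset.univ.filter (fun j : Fin n => ¬ (j : ℕ) < r), t * w j =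
      t * ∑ j ∈ Finset.univ.filter (fun j : Fin n => ¬ (j : ℕ) < r), w j :=
    Finset.mul_sum _ _ _ |>.symm
  have e3 : t * (∑ j ∈ s, w j +
      ∑ j ∈ Finset.univ.filter (fun j : Fin n => ¬ (j : ℕ) < r), w j) = t * r :=
    congrArg (t * ·) hwsplit
  have hc : (s.card : ℝ) = (r : ℝ) := by rw [hcard]
  rw [hsplit]
  rw [mul_add] at e3
  have hc' : t * (s.card : ℝ) = t * (r : ℝ) := by rw [hc]
  linarith [h1, h2, e1, e2]


lemma eigDesc_antitone {n : ℕ} {M : Matrix (Fin n) (Fin n) ℝ} (hM : M.IsHermitian) :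
    Antitone (eigDesc hM) := by
  intro a b hab
  exact Tuple.monotone_sort hM.eigenvalues (Fin.rev_le_rev.mpr hab)

lemma sum_filter_lt_eq {n r : ℕ} (hrn : r ≤ n) (f : Fin n → ℝ) :
    ∑ j ∈ Finset.univ.filter (fun j : Fin n => (j : ℕ) < r), f j
      = ∑ a : Fin r, f (Fin.castLE hrn a) := by
  refine (Finset.sum_bij' (fun (j : Fin n) (hj : j ∈ Finset.univ.filter
      (fun j : Fin n => (j : ℕ) < r)) => (⟨(j : ℕ), (Finset.mem_filter.mp hj).2⟩ : Fin r))
    (fun a _ => Fin.castLE hrn a) ?_ ?_ ?_ ?_ ?_) <;>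
    simp [Fin.ext_iff]

lemma kyfan {n r : ℕ} (hr1 : 1 ≤ r) (hrn : r ≤ n) {K : Matrix (Fin n) (Fin n) ℝ}
    (hK : K.IsHermitian) {U : Matrix (Fin n) (Fin r) ℝ} (hU : Uᵀ * U = 1) :
    (K * (U * Uᵀ)).trace ≤ ∑ a : Fin r, eigDesc hK (Fin.castLE hrn a) := by
  set V : Matrix (Fin n) (Fin n) ℝ := ↑(hK.eigenvectorUnitary) with hVdef
  have hVstar : star (hK.eigenvectorUnitary : Matrix (Fin n) (Fin n) ℝ) = Vᵀ := by
    rw [Matrix.star_eq_conjTranspose, conjTranspose_eq_transpose_of_trivial]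
  have hV1 : Vᵀ * V = 1 := by
    rw [← hVstar]; exact Unitary.coe_star_mul_self hK.eigenvectorUnitary
  have hV2 : V * Vᵀ = 1 := by
    rw [← hVstar]; exact Unitary.coe_mul_star_self hK.eigenvectorUnitary
  have hspec : K = V * diagonal (hK.eigenvalues) * Vᵀ := by
    have h := hK.spectral_theorem
    rw [Unitary.conjStarAlgAut_apply, hVstar] at h
    simpa using h
  set μ := hK.eigenvalues with hμ
  set w : Fin n → ℝ := fun j => ∑ a, ((Uᵀ * V) a j) ^ 2 with hw
  have eM : Vᵀ * (U * (Uᵀ * V)) = (Uᵀ * V)ᵀ * (Uᵀ * V) := by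
    simp [transpose_mul, Matrix.mul_assoc]
  have htr : (K * (U * Uᵀ)).trace = ∑ j, μ j * w j := by
    conv_lhs => rw [hspec]
    have e1 : V * diagonal μ * Vᵀ * (U * Uᵀ) = V * (diagonal μ * (Vᵀ * (U * Uᵀ))) := by
      simp [Matrix.mul_assoc]
    rw [e1, Matrix.trace_mul_comm]
    have e2 : diagonal μ * (Vᵀ * (U * Uᵀ)) * V = diagonal μ * ((Uᵀ * V)ᵀ * (Uᵀ * V)) := by
      rw [← eM]; simp [Matrix.mul_assoc]
    rw [e2]
    simp only [Matrix.trace, Matrix.diag, Matrix.diagonal_mul, hw]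
    congr 1; ext j
    simp [mul_apply, sq, Finset.mul_sum, mul_comm]
  have hw0 : ∀ j, 0 ≤ w j := by intro j; apply Finset.sum_nonneg; intro a _; positivity
  have hw1 : ∀ j, w j ≤ 1 := by
    intro j
    have h1 := sum_sq_transpose_mulVec_le hU (fun i => V i j)
    have h2 : ∑ i, (V i j) ^ 2 = 1 := by
      have := congrFun (congrFun hV1 j) j
      simpa [mul_apply, sq, Matrix.one_apply] using this
    calc w j = ∑ a, (∑ i, U i a * V i j) ^ 2 := by
          simp [hw, mul_apply]
      _ ≤ ∑ i, (V i j) ^ 2 := h1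
      _ = 1 := h2
  have hwsum : ∑ j, w j = (r : ℝ) := by
    have e3 : ∑ j, w j = ((Uᵀ * V)ᵀ * (Uᵀ * V)).trace := by
      rw [← frobSq_eq_trace]
      simp only [hw, frobSq]
      exact Finset.sum_comm
    rw [e3, Matrix.trace_mul_comm]
    have e4 : (Uᵀ * V) * (Uᵀ * V)ᵀ = Uᵀ * U := by
      have : V * (Vᵀ * U) = U := by rw [← Matrix.mul_assoc, hV2, Matrix.one_mul]
      simp [transpose_mul, Matrix.mul_assoc, this]
    rw [e4, hU]
    simp
  set σ : Equiv.Perm (Fin n) := Fin.revPerm.trans (Tuple.sort μ) with hσ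
  have hre : ∑ j, μ j * w j = ∑ j, eigDesc hK j * w (σ j) := by
    rw [← Equiv.sum_comp σ (fun j => μ j * w j)]
    rfl
  have hbound : ∑ j, eigDesc hK j * w (σ j) ≤
      ∑ j ∈ Finset.univ.filter (fun j : Fin n => (j : ℕ) < r), eigDesc hK j := by
    refine weighted_sum_le hr1 hrn _ _ (eigDesc_antitone hK) (fun j => hw0 _) (fun j => hw1 _) ?_
    rw [Equiv.sum_comp σ w, hwsum]
  rw [htr, hre, ← sum_filter_lt_eq hrn]
  exact hbound

lemma procrustes {r : ℕ} (B : Matrix (Fin r) (Fin r) ℝ)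
    (hB : ∀ x : Fin r → ℝ, ∑ k, (B *ᵥ x) k ^ 2 ≤ ∑ k, (x k) ^ 2) :
    ∃ R : Matrix (Fin r) (Fin r) ℝ, Rᵀ * R = 1 ∧ (Bᵀ * B).trace ≤ (Rᵀ * B).trace := by
  set H : Matrix (Fin r) (Fin r) ℝ := Bᵀ * B with hHdef
  have hH : H.PosSemidef := by
    have := Matrix.posSemidef_conjTranspose_mul_self B
    rwa [conjTranspose_eq_transpose_of_trivial] at this
  have hHH : H.IsHermitian := hH.1
  set d := hHH.eigenvalues with hd
  have hd0 : ∀ i, 0 ≤ d i := fun i => hH.eigenvalues_nonneg i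
  set V : Matrix (Fin r) (Fin r) ℝ := ↑(hHH.eigenvectorUnitary) with hVdef
  have hVstar : star (hHH.eigenvectorUnitary : Matrix (Fin r) (Fin r) ℝ) = Vᵀ := by
    rw [Matrix.star_eq_conjTranspose, conjTranspose_eq_transpose_of_trivial]
  have hV1 : Vᵀ * V = 1 := by
    rw [← hVstar]; exact Unitary.coe_star_mul_self hHH.eigenvectorUnitary
  have hV2 : V * Vᵀ = 1 := by
    rw [← hVstar]; exact Unitary.coe_mul_star_self hHH.eigenvectorUnitary
  have hspec : H = V * diagonal d * Vᵀ := by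
    have h := hHH.spectral_theorem
    rw [Unitary.conjStarAlgAut_apply, hVstar] at h
    simpa using h
  -- eigenvalues at most 1
  have hd1 : ∀ i, d i ≤ 1 := by
    intro i
    set v : Fin r → ℝ := ⇑(hHH.eigenvectorBasis i) with hv
    have hveq : d i = v ⬝ᵥ (H *ᵥ v) := by
      have := hHH.eigenvalues_eq i
      simpa using this
    have h1 : v ⬝ᵥ (H *ᵥ v) = ∑ k, ((B *ᵥ v) k) ^ 2 := by
      rw [hHdef, ← Matrix.mulVec_mulVec, Matrix.dotProduct_mulVec, Matrix.vecMul_transpose]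
      simp [dotProduct, sq]
    have h2 : ∑ k, (v k) ^ 2 = 1 := by
      have hcol : ∀ k, V k i = v k := fun k => rfl
      have := congrFun (congrFun hV1 i) i
      simp only [mul_apply, transpose_apply, Matrix.one_apply_eq] at this
      rw [← this]
      exact Finset.sum_congr rfl fun k _ => by rw [hcol, sq]
    rw [hveq, h1]
    exact (hB v).trans_eq h2
  -- G = B V has orthogonal columns with norms √(d i)
  set G : Matrix (Fin r) (Fin r) ℝ := B * V with hGdef
  have hGtG : Gᵀ * G = diagonal d := by
    rw [hGdef, transpose_mul, Matrix.mul_assoc, ← Matrix.mul_assoc Bᵀ B V, ← hHdef, hspec]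
    rw [show Vᵀ * (V * diagonal d * Vᵀ * V) = (Vᵀ * V) * diagonal d * (Vᵀ * V) by
      simp [Matrix.mul_assoc], hV1]
    simp
  have hcolsq : ∀ i j, ∑ k, G k i * G k j = diagonal d i j := by
    intro i j
    have := congrFun (congrFun hGtG i) j
    simpa [mul_apply, transpose_apply] using this
  have hGzero : ∀ i, d i = 0 → ∀ k, G k i = 0 := by
    intro i hdi k
    have h := hcolsq i i
    rw [diagonal_apply_eq, hdi] at h
    have : ∀ l, 0 ≤ G l i * G l i := fun l => mul_self_nonneg _
    have hk : G k i * G k i = 0 := by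
      by_contra hne
      have hlt : 0 < G k i * G k i := lt_of_le_of_ne (this k) (Ne.symm hne)
      have : 0 < ∑ l, G l i * G l i := Finset.sum_pos' (fun l _ => this l) ⟨k, Finset.mem_univ k, hlt⟩
      rw [h] at this; exact lt_irrefl 0 this
    exact mul_self_eq_zero.mp hk
  -- orthonormal family from the nonzero columns
  set s : Set (Fin r) := {i | d i ≠ 0} with hsdef
  set v : Fin r → EuclideanSpace ℝ (Fin r) :=
    fun i => (WithLp.equiv 2 (Fin r → ℝ)).symm (fun k => G k i / Real.sqrt (d i)) with hvdef
  have hinner : ∀ i j, inner ℝ (v i) (v j) =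
      (1 / (Real.sqrt (d i) * Real.sqrt (d j))) * (diagonal d i j) := by
    intro i j
    rw [← hcolsq i j]
    simp only [hvdef, PiLp.inner_apply, RCLike.inner_apply, starRingEnd_apply, star_trivial,
      WithLp.equiv_symm_apply, PiLp.toLp_apply, Finset.mul_sum]
    congr 1; ext k; field_simp; try ring
  have horth : Orthonormal ℝ (s.restrict v) := by
    rw [orthonormal_iff_ite]
    intro ⟨i, hi⟩ ⟨j, hj⟩
    rw [show s.restrict v ⟨i, hi⟩ = v i from rfl, show s.restrict v ⟨j, hj⟩ = v j from rfl, hinner i j]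
    by_cases hij : i = j
    · subst hij
      rw [if_pos (Subtype.ext rfl), diagonal_apply_eq, Real.mul_self_sqrt (hd0 i)]
      have hdi : d i ≠ 0 := hi
      field_simp
    · have hne : (⟨i, hi⟩ : s) ≠ ⟨j, hj⟩ := by simp [hij]
      rw [if_neg hne, diagonal_apply_ne _ hij, mul_zero]
  obtain ⟨b, hb⟩ := horth.exists_orthonormalBasis_extension_of_card_eq
    (by simp [finrank_euclideanSpace_fin])
  set N : Matrix (Fin r) (Fin r) ℝ := Matrix.of (fun k i => b i k) with hNdef
  have hNtN : Nᵀ * N = 1 := by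
    ext i j
    have := (orthonormal_iff_ite.mp b.orthonormal) i j
    simp only [PiLp.inner_apply, RCLike.inner_apply, starRingEnd_apply, star_trivial] at this
    simp only [mul_apply, transpose_apply, hNdef, Matrix.of_apply, Matrix.one_apply]
    rw [← this]
    exact Finset.sum_congr rfl fun k _ => mul_comm _ _
  refine ⟨N * Vᵀ, ?_, ?_⟩
  · rw [transpose_mul, transpose_transpose, Matrix.mul_assoc, ← Matrix.mul_assoc Nᵀ N Vᵀ,
      hNtN, Matrix.one_mul, hV2]
  · -- trace identities
    have htr1 : (Bᵀ * B).trace = ∑ i, d i := by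
      rw [← hHdef, hspec, Matrix.trace_mul_cycle, hV1, Matrix.one_mul, trace_diagonal]
    have htr2 : ((N * Vᵀ)ᵀ * B).trace = ∑ i, Real.sqrt (d i) := by
      rw [transpose_mul, transpose_transpose, Matrix.mul_assoc, Matrix.trace_mul_comm,
        Matrix.mul_assoc, ← hGdef]
      have : (Nᵀ * G).trace = ∑ i, ∑ k, b i k * G k i := by
        simp [Matrix.trace, Matrix.diag, mul_apply, hNdef]
      rw [this]
      refine Finset.sum_congr rfl fun i _ => ?_
      by_cases hi : d i = 0
      · rw [hi, Real.sqrt_zero]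
        refine Finset.sum_eq_zero fun k _ => by rw [hGzero i hi k, mul_zero]
      · have hbv : b i = v i := hb i hi
        have : ∀ k, b i k = G k i / Real.sqrt (d i) := by
          intro k; rw [hbv]; rfl
        calc ∑ k, b i k * G k i = (1 / Real.sqrt (d i)) * ∑ k, G k i * G k i := by
              rw [Finset.mul_sum]
              exact Finset.sum_congr rfl fun k _ => by rw [this k]; field_simp; try ring
          _ = Real.sqrt (d i) := by
              rw [hcolsq i i, diagonal_apply_eq]
              have hs : Real.sqrt (d i) ≠ 0 := fun h =>
                hi (by rw [← Real.mul_self_sqrt (hd0 i), h, mul_zero])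
              field_simp
              try linarith [Real.mul_self_sqrt (hd0 i)]
    rw [htr1, htr2]
    refine Finset.sum_le_sum fun i _ => ?_
    have hs1 : Real.sqrt (d i) ≤ 1 := Real.sqrt_le_one.mpr (hd1 i)
    nlinarith [Real.sq_sqrt (hd0 i), Real.sqrt_nonneg (d i)]

lemma mulVec_orthonormal_norm {n r : ℕ} {U : Matrix (Fin n) (Fin r) ℝ}
    (hU : Uᵀ * U = 1) (x : Fin r → ℝ) :
    ∑ i, ((U *ᵥ x) i) ^ 2 = ∑ a, (x a) ^ 2 := by
  have h1 : (U *ᵥ x) ⬝ᵥ (U *ᵥ x) = x ⬝ᵥ x := by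
    rw [Matrix.dotProduct_mulVec, ← Matrix.mulVec_transpose, Matrix.mulVec_mulVec, hU,
      Matrix.one_mulVec]
  simpa [dotProduct, sq] using h1


lemma nDistinctRows_le_of_factor {n r d : ℕ} (M : Matrix (Fin n) (Fin d) ℝ)
    (z : Fin n → Fin r) (g : Fin r → (Fin d → ℝ)) (h : ∀ i, M i = g (z i)) :
    nDistinctRows M ≤ r := by
  unfold nDistinctRows
  calc (Finset.univ.image fun i => M i).card
      ≤ (Finset.univ.image g).card := by
        apply Finset.card_le_card
        intro x hx
        simp only [Finset.mem_image, Finset.mem_univ, true_and] at hx ⊢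
        obtain ⟨i, hi⟩ := hx
        exact ⟨z i, by rw [← h i, hi]⟩
    _ ≤ (Finset.univ : Finset (Fin r)).card := Finset.card_image_le
    _ = r := by simp


set_option maxHeartbeats 2000000 in
/-- deterministic misclustering bound for K-SVD in the equal-variance,
equal-separation case: for `0 ≤ β < α ≤ 1`, `r ≥ 2`, `n ≥ r+1`, `Z` the membership matrix
of a partition into `r` clusters of size `n/r`, `K̃ = (α−β)·ZZᵀ + β·E_n + (1−α)·I_n`, `K`
symmetric with `Û` a matrix of orthonormal eigenvectors of `K` for its `r` largest
eigenvalues, and `C` (rows `c_i`) a minimizer of `‖Û − M‖_F²` over matrices with at most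
`r` distinct rows, there exist `ν` with `νᵀν = (r/n)·I_r` and orthogonal `R` such that
`|{i : ‖c_i − Z_i ν R‖ ≥ √(r/(2n))}| ≤ 64·r·‖K − K̃‖_F²/((α−β)²·n)`. -/
theorem stmt_17 (n r : ℕ) (hr : 2 ≤ r) (hn : r + 1 ≤ n) (hdvd : r ∣ n)
    (α β : ℝ) (hβ0 : 0 ≤ β) (hβα : β < α) (hα1 : α ≤ 1)
    (z : Fin n → Fin r)
    (hsize : ∀ k : Fin r, (Finset.univ.filter fun i => z i = k).card = n / r)
    (Z : Matrix (Fin n) (Fin r) ℝ)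
    (hZ : Z = Matrix.of (fun i k => if z i = k then (1 : ℝ) else 0))
    (Kt : Matrix (Fin n) (Fin n) ℝ)
    (hKt : Kt = (α - β) • (Z * Zᵀ) + β • (Matrix.of fun _ _ => (1 : ℝ)) +
      (1 - α) • (1 : Matrix (Fin n) (Fin n) ℝ))
    (K : Matrix (Fin n) (Fin n) ℝ) (hK : K.IsHermitian)
    (Uh : Matrix (Fin n) (Fin r) ℝ)
    (hUorth : Uhᵀ * Uh = 1)
    (hUeig : ∀ a : Fin r,
      K *ᵥ (fun i => Uh i a) =
        eigDesc hK ⟨(a : ℕ), by omega⟩ • (fun i => Uh i a))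
    (C : Matrix (Fin n) (Fin r) ℝ)
    (hCr : nDistinctRows C ≤ r)
    (hCopt : ∀ M : Matrix (Fin n) (Fin r) ℝ, nDistinctRows M ≤ r →
      frobSq (Uh - C) ≤ frobSq (Uh - M)) :
    ∃ (ν R : Matrix (Fin r) (Fin r) ℝ),
      νᵀ * ν = ((r : ℝ) / n) • (1 : Matrix (Fin r) (Fin r) ℝ) ∧ Rᵀ * R = 1 ∧
      ((Finset.univ.filter fun i : Fin n =>
          Real.sqrt ((r : ℝ) / (2 * n)) ≤
            Real.sqrt (∑ a, (C i a - (Z * ν * R) i a) ^ 2)).card : ℝ) ≤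
        64 * r * frobSq (K - Kt) / ((α - β) ^ 2 * n) := by
  have hr0 : 0 < r := by omega
  have hn0 : 0 < n := by omega
  have hrn : r ≤ n := by omega
  have hrR : (0 : ℝ) < r := by exact_mod_cast hr0
  have hnR : (0 : ℝ) < n := by exact_mod_cast hn0
  have hab : (0 : ℝ) < α - β := by linarith
  set nr : ℝ := (n : ℝ) / r with hnrdef
  have hnrpos : 0 < nr := by positivity
  have hcast : ((n / r : ℕ) : ℝ) = nr := by
    rw [hnrdef, Nat.cast_div hdvd (by exact_mod_cast hr0.ne')]
  -- Z has orthogonal columns of squared norm n/r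
  have hZtZ : Zᵀ * Z = nr • (1 : Matrix (Fin r) (Fin r) ℝ) := by
    ext k l
    simp only [mul_apply, transpose_apply, hZ, Matrix.of_apply, Matrix.smul_apply, Matrix.one_apply,
      smul_eq_mul]
    by_cases hkl : k = l
    · subst hkl
      rw [if_pos rfl, mul_one]
      have he : ∀ i : Fin n, (if z i = k then (1:ℝ) else 0) * (if z i = k then 1 else 0)
          = if z i = k then 1 else 0 := fun i => by split_ifs <;> ring
      rw [Finset.sum_congr rfl (fun i _ => he i), Finset.sum_boole, ← hcast, hsize k]
    · rw [if_neg hkl, mul_zero]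
      apply Finset.sum_eq_zero; intro i _
      split_ifs with h1 h2 <;> first | exact absurd (h1.symm.trans h2) hkl | ring
  have hZcolsum : ∀ k, ∑ i, Z i k = nr := by
    intro k
    rw [hZ]
    simp only [Matrix.of_apply]
    rw [Finset.sum_boole, ← hcast, hsize k]
  set c : ℝ := Real.sqrt ((r : ℝ) / n) with hcdef
  have hc2 : c * c = (r : ℝ) / n := Real.mul_self_sqrt (by positivity)
  have hcpos : 0 < c := Real.sqrt_pos.mpr (by positivity)
  set U : Matrix (Fin n) (Fin r) ℝ := c • Z with hUdef
  have hUU : Uᵀ * U = 1 := by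
    rw [hUdef, transpose_smul, Matrix.smul_mul, Matrix.mul_smul, hZtZ, smul_smul, smul_smul]
    rw [show c * c * nr = 1 by rw [hc2, hnrdef]; field_simp, one_smul]
  set P : Matrix (Fin n) (Fin n) ℝ := U * Uᵀ with hPdef
  set Ph : Matrix (Fin n) (Fin n) ℝ := Uh * Uhᵀ with hPhdef
  set B : Matrix (Fin r) (Fin r) ℝ := Uᵀ * Uh with hBdef
  -- traces
  have tP : P.trace = r := by
    rw [hPdef, Matrix.trace_mul_comm, hUU, Matrix.trace_one]; simp
  have tPh : Ph.trace = r := by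
    rw [hPhdef, Matrix.trace_mul_comm, hUorth, Matrix.trace_one]; simp
  have tPPh : (P * Ph).trace = (Bᵀ * B).trace := by
    have hBt : Bᵀ = Uhᵀ * U := by rw [hBdef, transpose_mul, transpose_transpose]
    rw [hPdef, hPhdef,
      show U * Uᵀ * (Uh * Uhᵀ) = U * (B * Uhᵀ) by rw [hBdef]; simp [Matrix.mul_assoc],
      Matrix.trace_mul_comm,
      show B * Uhᵀ * U = B * (Uhᵀ * U) by simp [Matrix.mul_assoc],
      Matrix.trace_mul_comm, hBt]
  set D : Matrix (Fin n) (Fin n) ℝ := P - Ph with hDdef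
  set F : ℝ := frobSq D with hFdef
  have hPsym : Pᵀ = P := by rw [hPdef, transpose_mul, transpose_transpose]
  have hPhsym : Phᵀ = Ph := by rw [hPhdef, transpose_mul, transpose_transpose]
  have hPP : P * P = P := by
    rw [hPdef, show U * Uᵀ * (U * Uᵀ) = U * ((Uᵀ * U) * Uᵀ) by simp [Matrix.mul_assoc], hUU,
      Matrix.one_mul]
  have hPhPh : Ph * Ph = Ph := by
    rw [hPhdef, show Uh * Uhᵀ * (Uh * Uhᵀ) = Uh * ((Uhᵀ * Uh) * Uhᵀ) by simp [Matrix.mul_assoc],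
      hUorth, Matrix.one_mul]
  have hF : F = 2 * r - 2 * (P * Ph).trace := by
    rw [hFdef, frobSq_eq_trace, hDdef, transpose_sub, hPsym, hPhsym, Matrix.sub_mul,
      Matrix.mul_sub, Matrix.mul_sub, hPP, hPhPh]
    rw [Matrix.trace_sub, Matrix.trace_sub, Matrix.trace_sub, tP, tPh,
      Matrix.trace_mul_comm Ph P]
    ring
  have hFnonneg : 0 ≤ F := frobSq_nonneg D
  -- step A1 : trace (Kt * D) ≥ (α-β) * nr * F / 2
  have hPD : (P * D).trace = F / 2 := by
    rw [hDdef, Matrix.mul_sub, Matrix.trace_sub, hPP, tP, hF]; ring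
  have hZZnrP : Z * Zᵀ = nr • P := by
    rw [hPdef, hUdef, transpose_smul, Matrix.smul_mul, Matrix.mul_smul, smul_smul, smul_smul,
      show nr * c * c = 1 by rw [mul_assoc, hc2, hnrdef]; field_simp, one_smul]
  set one1 : Matrix (Fin n) (Fin 1) ℝ := Matrix.of (fun _ _ => 1) with honedef
  have hJ : (Matrix.of fun _ _ => (1:ℝ) : Matrix (Fin n) (Fin n) ℝ) = one1 * one1ᵀ := by
    ext i j; simp [honedef, mul_apply]
  have hfrobone : frobSq one1 = n := by simp [frobSq, honedef]
  have hJP : ∀ (W : Matrix (Fin n) (Fin r) ℝ), ((one1 * one1ᵀ) * (W * Wᵀ)).trace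
      = frobSq (Wᵀ * one1) := by
    intro W
    rw [show one1 * one1ᵀ * (W * Wᵀ) = one1 * ((one1ᵀ * W) * Wᵀ) by simp [Matrix.mul_assoc],
      Matrix.trace_mul_comm, frobSq_eq_trace, transpose_mul, transpose_transpose]
    congr 1
    simp [Matrix.mul_assoc]
  have hJPval : ((one1 * one1ᵀ) * P).trace = n := by
    rw [hPdef, hJP U]
    have : ∀ k (j : Fin 1), (Uᵀ * one1) k j = c * nr := by
      intro k j
      simp only [mul_apply, transpose_apply, honedef, Matrix.of_apply, mul_one, hUdef,
        Matrix.smul_apply, smul_eq_mul]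
      rw [← Finset.mul_sum, hZcolsum k]
    rw [frobSq]
    rw [Finset.sum_congr rfl (fun k _ => Finset.sum_congr rfl (fun j _ => by rw [this k j]))]
    simp only [Finset.sum_const, Finset.card_univ, Fintype.card_fin, nsmul_eq_mul, mul_one]
    rw [mul_pow, hnrdef]
    rw [show c ^ 2 = c * c by ring, hc2]
    field_simp
    ring
  have hJPh : ((one1 * one1ᵀ) * Ph).trace ≤ n := by
    rw [hPhdef, hJP Uh]
    calc frobSq (Uhᵀ * one1) ≤ frobSq one1 := frobSq_transpose_mul_le hUorth one1
      _ = n := hfrobone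
  have hKtD : (α - β) * nr * (F / 2) ≤ (Kt * D).trace := by
    rw [hKt, Matrix.add_mul, Matrix.add_mul, Matrix.trace_add, Matrix.trace_add,
      Matrix.smul_mul, Matrix.smul_mul, Matrix.smul_mul, Matrix.trace_smul, Matrix.trace_smul,
      Matrix.trace_smul, Matrix.one_mul]
    have h1 : (Z * Zᵀ * D).trace = nr * (F / 2) := by
      rw [hZZnrP, Matrix.smul_mul, Matrix.trace_smul, hPD, smul_eq_mul]
    have h2 : (0:ℝ) ≤ ((Matrix.of fun _ _ => (1:ℝ) : Matrix (Fin n) (Fin n) ℝ) * D).trace := by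
      rw [hJ, hDdef, Matrix.mul_sub, Matrix.trace_sub]
      have := hJPh
      linarith [hJPval, hJPh]
    have h3 : D.trace = 0 := by rw [hDdef, Matrix.trace_sub, tP, tPh]; ring
    rw [h1, h3]
    simp only [smul_eq_mul]
    nlinarith [h2, hβ0]
  -- step A2 : trace (K * D) ≤ 0
  have hKD : (K * D).trace ≤ 0 := by
    have hKP := kyfan (by omega) hrn hK hUU
    rw [← hPdef] at hKP
    have hKUh : K * Uh = Uh * diagonal (fun a : Fin r => eigDesc hK (Fin.castLE hrn a)) := by
      ext i a
      have h := congrFun (hUeig a) i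
      simp only [Matrix.mulVec, dotProduct, Pi.smul_apply, smul_eq_mul] at h
      rw [Matrix.mul_diagonal]
      simp only [mul_apply]
      rw [h]
      have : (⟨(a : ℕ), by omega⟩ : Fin n) = Fin.castLE hrn a := rfl
      rw [this, mul_comm]
    have hKPh : (K * Ph).trace = ∑ a : Fin r, eigDesc hK (Fin.castLE hrn a) := by
      rw [hPhdef, ← Matrix.mul_assoc, hKUh, Matrix.trace_mul_comm]
      rw [show Uhᵀ * (Uh * diagonal (fun a : Fin r => eigDesc hK (Fin.castLE hrn a)))
          = (Uhᵀ * Uh) * diagonal (fun a : Fin r => eigDesc hK (Fin.castLE hrn a)) by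
        simp [Matrix.mul_assoc], hUorth, Matrix.one_mul, trace_diagonal]
    rw [hDdef, Matrix.mul_sub, Matrix.trace_sub, hKPh]
    linarith [hKP]
  -- Cauchy-Schwarz step
  set Esq : ℝ := frobSq (Kt - K) with hEdef
  have hEnonneg : 0 ≤ Esq := frobSq_nonneg _
  have hKtsym : Ktᵀ = Kt := by
    have hJsym : (Matrix.of fun _ _ => (1:ℝ) : Matrix (Fin n) (Fin n) ℝ)ᵀ
        = Matrix.of fun _ _ => (1:ℝ) := by ext i j; rfl
    rw [hKt, transpose_add, transpose_add, transpose_smul, transpose_smul, transpose_smul,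
      transpose_mul, transpose_transpose, transpose_one, hJsym]
  have hKsym : Kᵀ = K := by
    have := hK
    rwa [Matrix.IsHermitian, conjTranspose_eq_transpose_of_trivial] at this
  have hCS : ((Kt - K) * D).trace ≤ Real.sqrt Esq * Real.sqrt F := by
    have e : ((Kt - K) * D).trace = fip (Kt - K) D := by
      rw [fip_eq_trace, transpose_sub, hKtsym, hKsym]
    rw [e, hEdef, hFdef]
    exact fip_cs _ _
  have hgF : (α - β) * nr * (F / 2) ≤ Real.sqrt Esq * Real.sqrt F := by
    have : ((Kt - K) * D).trace = (Kt * D).trace - (K * D).trace := by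
      rw [Matrix.sub_mul, Matrix.trace_sub]
    linarith [hKtD, hKD, hCS]
  -- Davis–Kahan type bound
  have hFbound : F * (((α - β) * nr) ^ 2) ≤ 4 * Esq := by
    have hsF0 : 0 ≤ Real.sqrt F := Real.sqrt_nonneg F
    have hsE0 : 0 ≤ Real.sqrt Esq := Real.sqrt_nonneg Esq
    have hFs : Real.sqrt F ^ 2 = F := Real.sq_sqrt hFnonneg
    have hEs : Real.sqrt Esq ^ 2 = Esq := Real.sq_sqrt hEnonneg
    rcases eq_or_lt_of_le hsF0 with h0 | hsFpos
    · have hF0 : F = 0 := by rw [← hFs, ← h0]; ring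
      rw [hF0, zero_mul]; linarith
    · have e : Real.sqrt F * Real.sqrt F = F := Real.mul_self_sqrt hFnonneg
      have hgF' : (α - β) * nr * (Real.sqrt F * Real.sqrt F / 2)
          ≤ Real.sqrt Esq * Real.sqrt F := by rw [e]; exact hgF
      have key : (α - β) * nr * Real.sqrt F / 2 * Real.sqrt F ≤ Real.sqrt Esq * Real.sqrt F := by
        calc (α - β) * nr * Real.sqrt F / 2 * Real.sqrt F
            = (α - β) * nr * (Real.sqrt F * Real.sqrt F / 2) := by ring
          _ ≤ Real.sqrt Esq * Real.sqrt F := hgF'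
      have key2 : (α - β) * nr * Real.sqrt F / 2 ≤ Real.sqrt Esq :=
        le_of_mul_le_mul_right key hsFpos
      have hLnn : 0 ≤ (α - β) * nr * Real.sqrt F / 2 := by positivity
      have hsq : ((α - β) * nr * Real.sqrt F / 2) * ((α - β) * nr * Real.sqrt F / 2)
          ≤ Real.sqrt Esq * Real.sqrt Esq := mul_le_mul key2 key2 hLnn hsE0
      have hEe : Real.sqrt Esq * Real.sqrt Esq = Esq := Real.mul_self_sqrt hEnonneg
      have h4 : 4 * (((α - β) * nr * Real.sqrt F / 2) * ((α - β) * nr * Real.sqrt F / 2))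
          = ((α - β) * nr) ^ 2 * (Real.sqrt F * Real.sqrt F) := by ring
      rw [e] at h4
      rw [hEe] at hsq
      linarith
  -- Procrustes alignment
  have hBcontr : ∀ x : Fin r → ℝ, ∑ k, ((B *ᵥ x) k) ^ 2 ≤ ∑ k, (x k) ^ 2 := by
    intro x
    have h1 : B *ᵥ x = Uᵀ *ᵥ (Uh *ᵥ x) := by rw [Matrix.mulVec_mulVec, hBdef]
    have h2 : ∑ a, ((Uᵀ *ᵥ (Uh *ᵥ x)) a) ^ 2 ≤ ∑ i, ((Uh *ᵥ x) i) ^ 2 := by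
      have h := sum_sq_transpose_mulVec_le hUU (Uh *ᵥ x)
      simpa [Matrix.mulVec, dotProduct, transpose_apply, mul_comm] using h
    have h3 : ∑ i, ((Uh *ᵥ x) i) ^ 2 = ∑ a, (x a) ^ 2 := mulVec_orthonormal_norm hUorth x
    rw [h1, ← h3]
    exact h2
  obtain ⟨R, hRorth, hRB⟩ := procrustes B hBcontr
  have hUhUR : frobSq (Uh - U * R) ≤ F := by
    have e1 : (Uh - U * R)ᵀ * (Uh - U * R)
        = Uhᵀ * Uh - Uhᵀ * (U * R) - (U * R)ᵀ * Uh + (U * R)ᵀ * (U * R) := by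
      rw [transpose_sub, Matrix.sub_mul, Matrix.mul_sub, Matrix.mul_sub]
      abel
    have e2 : (U * R)ᵀ * (U * R) = 1 := by
      rw [transpose_mul, show Rᵀ * Uᵀ * (U * R) = Rᵀ * ((Uᵀ * U) * R) by simp [Matrix.mul_assoc],
        hUU, Matrix.one_mul, hRorth]
    have e3 : ((U * R)ᵀ * Uh).trace = (Rᵀ * B).trace := by
      rw [transpose_mul, hBdef, Matrix.mul_assoc]
    have e4 : (Uhᵀ * (U * R)).trace = (Rᵀ * B).trace := by
      rw [← Matrix.trace_transpose (Uhᵀ * (U * R)), transpose_mul, transpose_mul,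
        transpose_transpose, hBdef, Matrix.mul_assoc]
    have efr : frobSq (Uh - U * R) = 2 * r - 2 * (Rᵀ * B).trace := by
      rw [frobSq_eq_trace, e1, Matrix.trace_add, Matrix.trace_sub, Matrix.trace_sub, hUorth,
        e2, Matrix.trace_one, e3, e4]
      simp only [Fintype.card_fin, Nat.card_eq_fintype_card]
      push_cast
      ring
    rw [efr, hF, tPPh]
    linarith only [hRB]
  -- k-means optimality and triangle inequality
  have hdist : nDistinctRows (U * R) ≤ r := by
    apply nDistinctRows_le_of_factor (U * R) z (fun k => fun a => c * R k a)
    intro i; funext a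
    rw [hUdef]
    simp only [mul_apply, Matrix.smul_apply, smul_eq_mul, hZ, Matrix.of_apply]
    have he : ∀ k : Fin r, c * (if z i = k then (1:ℝ) else 0) * R k a
        = if z i = k then c * R k a else 0 := fun k => by split_ifs <;> ring
    rw [Finset.sum_congr rfl fun k _ => he k,
      Finset.sum_ite_eq Finset.univ (z i) (fun k => c * R k a)]
    simp
  have htri : frobSq (C - U * R) ≤ 4 * frobSq (Uh - U * R) := by
    have hopt := hCopt (U * R) hdist
    have hsub : C - U * R = (C - Uh) + (Uh - U * R) := by abel
    have h1 := frobSq_add_le (C - Uh) (Uh - U * R)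
    rw [← hsub] at h1
    have h3 : Real.sqrt (frobSq (C - Uh)) ≤ Real.sqrt (frobSq (Uh - U * R)) := by
      rw [frobSq_sub_comm]
      exact Real.sqrt_le_sqrt hopt
    have h4 := Real.sqrt_nonneg (frobSq (Uh - U * R))
    have h5 := Real.sq_sqrt (frobSq_nonneg (Uh - U * R))
    have h6 : (Real.sqrt (frobSq (C - Uh)) + Real.sqrt (frobSq (Uh - U * R))) ^ 2
        ≤ (Real.sqrt (frobSq (Uh - U * R)) + Real.sqrt (frobSq (Uh - U * R))) ^ 2 := by
      apply pow_le_pow_left₀ (by positivity) (by linarith only [h3])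
    have h7 : (Real.sqrt (frobSq (Uh - U * R)) + Real.sqrt (frobSq (Uh - U * R))) ^ 2
        = 4 * frobSq (Uh - U * R) := by
      rw [show (Real.sqrt (frobSq (Uh - U * R)) + Real.sqrt (frobSq (Uh - U * R))) ^ 2
        = 4 * Real.sqrt (frobSq (Uh - U * R)) ^ 2 by ring, h5]
    linarith only [h1, h6, h7]
  -- conclusion
  refine ⟨c • (1 : Matrix (Fin r) (Fin r) ℝ), R, ?_, hRorth, ?_⟩
  · rw [transpose_smul, transpose_one, Matrix.smul_mul, Matrix.mul_smul, Matrix.one_mul,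
      smul_smul, hc2]
  · have hZν : Z * (c • (1 : Matrix (Fin r) (Fin r) ℝ)) * R = U * R := by
      rw [Matrix.mul_smul, Matrix.mul_one, hUdef, Matrix.smul_mul]
    rw [hZν]
    set S := Finset.univ.filter (fun i : Fin n =>
      Real.sqrt ((r : ℝ) / (2 * n)) ≤
        Real.sqrt (∑ a, (C i a - (U * R) i a) ^ 2)) with hSdef
    have hper : ∀ i ∈ S, (r : ℝ) / (2 * n) ≤ ∑ a, (C i a - (U * R) i a) ^ 2 := by
      intro i hi
      rw [hSdef, Finset.mem_filter] at hi
      have h := hi.2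
      have ha : (0:ℝ) ≤ (r : ℝ) / (2 * n) := by positivity
      have hb : (0:ℝ) ≤ ∑ a, (C i a - (U * R) i a) ^ 2 := by positivity
      calc (r : ℝ) / (2 * n) = Real.sqrt ((r : ℝ) / (2 * n)) ^ 2 := (Real.sq_sqrt ha).symm
        _ ≤ Real.sqrt (∑ a, (C i a - (U * R) i a) ^ 2) ^ 2 :=
            pow_le_pow_left₀ (Real.sqrt_nonneg _) h 2
        _ = _ := Real.sq_sqrt hb
    have hsumS : (S.card : ℝ) * ((r : ℝ) / (2 * n)) ≤ frobSq (C - U * R) := by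
      calc (S.card : ℝ) * ((r : ℝ) / (2 * n)) = ∑ _i ∈ S, (r : ℝ) / (2 * n) := by
            rw [Finset.sum_const, nsmul_eq_mul]
        _ ≤ ∑ i ∈ S, ∑ a, (C i a - (U * R) i a) ^ 2 := Finset.sum_le_sum hper
        _ ≤ ∑ i, ∑ a, (C i a - (U * R) i a) ^ 2 := by
            apply Finset.sum_le_sum_of_subset_of_nonneg (Finset.filter_subset _ _)
            intro i _ _; positivity
        _ = frobSq (C - U * R) := by simp [frobSq, Matrix.sub_apply]
    have hEKKt : frobSq (K - Kt) = Esq := by rw [frobSq_sub_comm, ← hEdef]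
    rw [hEKKt]
    have hpos : (0:ℝ) < (α - β) ^ 2 * n := by positivity
    rw [le_div_iff₀ hpos]
    have hfC4F : frobSq (C - U * R) ≤ 4 * F := by linarith only [htri, hUhUR]
    have h7 : (S.card : ℝ) * ((r : ℝ) / (2 * n)) * (2 * n / r)
        ≤ frobSq (C - U * R) * (2 * n / r) :=
      mul_le_mul_of_nonneg_right hsumS (by positivity)
    have h8 : (S.card : ℝ) * ((r : ℝ) / (2 * n)) * (2 * n / r) = S.card := by
      field_simp
    rw [h8] at h7
    have hX : ((α - β) * nr) ^ 2 * (r : ℝ) ^ 2 = (α - β) ^ 2 * (n : ℝ) ^ 2 := by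
      rw [hnrdef]; field_simp
    have hF2 : F * ((α - β) ^ 2 * (n : ℝ) ^ 2) ≤ 4 * Esq * (r : ℝ) ^ 2 := by
      have h := mul_le_mul_of_nonneg_right hFbound (show (0:ℝ) ≤ (r : ℝ) ^ 2 by positivity)
      have e : F * (((α - β) * nr) ^ 2) * (r : ℝ) ^ 2 = F * ((α - β) ^ 2 * (n : ℝ) ^ 2) := by
        rw [← hX]; ring
      linarith only [h, e]
    have h11 : (S.card : ℝ) * ((α - β) ^ 2 * n)
        ≤ frobSq (C - U * R) * (2 * n / r) * ((α - β) ^ 2 * n) :=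
      mul_le_mul_of_nonneg_right h7 (le_of_lt hpos)
    have h12 : frobSq (C - U * R) * (2 * n / r) * ((α - β) ^ 2 * n)
        ≤ 4 * F * (2 * n / r) * ((α - β) ^ 2 * n) :=
      mul_le_mul_of_nonneg_right
        (mul_le_mul_of_nonneg_right hfC4F (by positivity)) (le_of_lt hpos)
    have h13 : 4 * F * (2 * (n : ℝ) / r) * ((α - β) ^ 2 * n)
        = (8 / r) * (F * ((α - β) ^ 2 * (n : ℝ) ^ 2)) := by ring
    have h14 : (8 / (r : ℝ)) * (F * ((α - β) ^ 2 * (n : ℝ) ^ 2))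
        ≤ (8 / r) * (4 * Esq * (r : ℝ) ^ 2) :=
      mul_le_mul_of_nonneg_left hF2 (by positivity)
    have h15 : (8 / (r : ℝ)) * (4 * Esq * (r : ℝ) ^ 2) = 32 * Esq * r := by
      field_simp; ring
    have h16 : (32 : ℝ) * Esq * r ≤ 64 * r * Esq := by
      have := mul_nonneg hEnonneg hrR.le
      linarith only [this]
    linarith only [h11, h12, h13, h14, h15, h16]
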